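/- For every N ∈ ℕ, N ≥ 2, the dispersion (i.e. the largest gap) of the first N terms of the sequence x_n := {log(2n−1)/log 2} on the torus equals (log(N+1) − log(N))/log(2). Consequently, lim_{N→∞} N·disp_N(x_n) = 1/log(2), so (x_n) is a low-dispersion sequence. -/

import Mathlib

open Real Filter

/-- The sequence `x_n = {log(2n-1)/log 2}`. -/
noncomputable def xseq (n : ℕ) : ℝ := Int.fract (Real.log (2 * (n : ℝ) - 1) / Real.log 2)

/-- The gap to the right (on the torus `ℝ/ℤ`) of the point `x_k` among the points
`x_1, …, x_N`, i.e. the distance from `x_k` to the nearest other point in the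
clockwise direction. -/
noncomputable def gapRight (N k : ℕ) : ℝ :=
  sInf ((fun l => Int.fract (xseq l - xseq k)) '' (Set.Icc 1 N \ {k}))

/-- The dispersion (largest gap on the torus) of the points `x_1, …, x_N`. -/
noncomputable def disp (N : ℕ) : ℝ := sSup (gapRight N '' Set.Icc 1 N)


/-- Auxiliary exponent. -/
def Kv (N : ℕ) : ℕ := Nat.log 2 (2 * N - 1)

/-- Integer representative of `xseq n` at level `Kv N`. -/
def tval (N n : ℕ) : ℕ := (2 * n - 1) * 2 ^ (Kv N - Nat.log 2 (2 * n - 1))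

lemma odd_two_sub_one {n : ℕ} (hn : 1 ≤ n) : ¬ 2 ∣ (2 * n - 1) := by omega

lemma log_le_Kv {N n : ℕ} (hnN : n ≤ N) : Nat.log 2 (2 * n - 1) ≤ Kv N :=
  Nat.log_mono_right (by omega)

lemma pow_Kv_le {N : ℕ} (hN : 1 ≤ N) : 2 ^ Kv N ≤ 2 * N - 1 :=
  Nat.pow_log_le_self 2 (by omega)

lemma two_N_lt_pow {N : ℕ} (hN : 1 ≤ N) : 2 * N - 1 < 2 ^ (Kv N + 1) :=
  Nat.lt_pow_succ_log_self (by norm_num) _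

lemma tval_lower {N n : ℕ} (hn : 1 ≤ n) (hnN : n ≤ N) : 2 ^ Kv N ≤ tval N n := by
  have h1 : 2 ^ Nat.log 2 (2 * n - 1) ≤ 2 * n - 1 := Nat.pow_log_le_self 2 (by omega)
  have h2 := log_le_Kv (N := N) hnN
  calc 2 ^ Kv N = 2 ^ Nat.log 2 (2 * n - 1) * 2 ^ (Kv N - Nat.log 2 (2 * n - 1)) := by
        rw [← pow_add]; congr 1; omega
    _ ≤ tval N n := Nat.mul_le_mul_right _ h1

lemma tval_upper {N n : ℕ} (hn : 1 ≤ n) (hnN : n ≤ N) : tval N n < 2 ^ (Kv N + 1) := by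
  have h1 : 2 * n - 1 < 2 ^ (Nat.log 2 (2 * n - 1) + 1) := Nat.lt_pow_succ_log_self (by norm_num) _
  have h2 := log_le_Kv (N := N) hnN
  calc tval N n < 2 ^ (Nat.log 2 (2 * n - 1) + 1) * 2 ^ (Kv N - Nat.log 2 (2 * n - 1)) :=
        mul_lt_mul_of_pos_right h1 (by positivity)
    _ = 2 ^ (Kv N + 1) := by rw [← pow_add]; congr 1; omega

lemma tval_pos {N n : ℕ} (hn : 1 ≤ n) (hnN : n ≤ N) : 0 < tval N n :=
  lt_of_lt_of_le (Nat.pow_pos (by norm_num)) (tval_lower hn hnN)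

lemma tval_odd_le {N n : ℕ} (hn : 1 ≤ n) (hnN : n ≤ N) (h : ¬ 2 ∣ tval N n) :
    tval N n ≤ 2 * N - 1 := by
  rcases Nat.lt_or_ge (Nat.log 2 (2 * n - 1)) (Kv N) with hlt | hge
  · exfalso; apply h
    have : Kv N - Nat.log 2 (2 * n - 1) ≠ 0 := by omega
    exact Dvd.dvd.mul_left (dvd_pow_self 2 this) _
  · have heq : Kv N - Nat.log 2 (2 * n - 1) = 0 := by omega
    have : tval N n = 2 * n - 1 := by rw [tval, heq, pow_zero, mul_one]
    omega

lemma odd_mul_pow_inj {d1 d2 a b : ℕ} (h1 : ¬ 2 ∣ d1) (h2 : ¬ 2 ∣ d2)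
    (h : d1 * 2 ^ a = d2 * 2 ^ b) : d1 = d2 := by
  rcases le_total a b with hab | hab
  · have h' : d1 * 2 ^ a = d2 * 2 ^ (b - a) * 2 ^ a := by
      rw [mul_assoc, ← pow_add, Nat.sub_add_cancel hab]; exact h
    have hd : d1 = d2 * 2 ^ (b - a) := Nat.eq_of_mul_eq_mul_right (by positivity) h'
    rcases Nat.eq_zero_or_pos (b - a) with h0 | h0
    · rw [h0, pow_zero, mul_one] at hd; exact hd
    · exfalso; apply h1; rw [hd]
      exact Dvd.dvd.mul_left (dvd_pow_self 2 (Nat.pos_iff_ne_zero.mp h0)) _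
  · have h' : d2 * 2 ^ b = d1 * 2 ^ (a - b) * 2 ^ b := by
      rw [mul_assoc, ← pow_add, Nat.sub_add_cancel hab]; exact h.symm
    have hd : d2 = d1 * 2 ^ (a - b) := Nat.eq_of_mul_eq_mul_right (by positivity) h'
    rcases Nat.eq_zero_or_pos (a - b) with h0 | h0
    · rw [h0, pow_zero, mul_one] at hd; omega
    · exfalso; apply h2; rw [hd]
      exact Dvd.dvd.mul_left (dvd_pow_self 2 (Nat.pos_iff_ne_zero.mp h0)) _

lemma tval_inj {N n n' : ℕ} (hn : 1 ≤ n) (hn' : 1 ≤ n')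
    (h : tval N n = tval N n') : n = n' := by
  have := odd_mul_pow_inj (odd_two_sub_one hn) (odd_two_sub_one hn') h
  omega

lemma tval_surj {N m : ℕ} (hN : 1 ≤ N) (h1 : 2 ^ Kv N ≤ m) (h2 : m < 2 ^ (Kv N + 1))
    (h3 : 2 ∣ m ∨ m ≤ 2 * N - 1) : ∃ n, 1 ≤ n ∧ n ≤ N ∧ tval N n = m := by
  have hm0 : m ≠ 0 := by have := Nat.pow_pos (n := Kv N) (show 0 < 2 by norm_num); omega
  obtain ⟨v, d, hmd, hdodd⟩ : ∃ v d, 2 ^ v * d = m ∧ ¬ 2 ∣ d :=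
    ⟨m.factorization 2, m / 2 ^ m.factorization 2, Nat.ordProj_mul_ordCompl_eq_self m 2,
      Nat.not_dvd_ordCompl (by norm_num) hm0⟩
  have hd0 : 0 < d := by rcases Nat.eq_zero_or_pos d with h | h; · simp [h] at hmd; omega
                         · exact h
  -- log of m
  have hlogm : Nat.log 2 m = Kv N := Nat.log_eq_of_pow_le_of_lt_pow h1 h2
  have hlogd : Nat.log 2 d + v = Kv N := by
    rw [← hlogm]
    have hp1 : 2 ^ (Nat.log 2 d + v) ≤ m := by
      rw [pow_add, ← hmd, mul_comm]
      exact Nat.mul_le_mul_left _ (Nat.pow_log_le_self 2 hd0.ne')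
    have hp2 : m < 2 ^ (Nat.log 2 d + v + 1) := by
      calc m = 2 ^ v * d := hmd.symm
        _ < 2 ^ v * 2 ^ (Nat.log 2 d + 1) :=
          mul_lt_mul_of_pos_left (Nat.lt_pow_succ_log_self (by norm_num) _) (by positivity)
        _ = 2 ^ (Nat.log 2 d + v + 1) := by rw [← pow_add]; ring_nf
    exact (Nat.log_eq_of_pow_le_of_lt_pow hp1 hp2).symm
  -- d ≤ 2N - 1
  have hdle : d ≤ 2 * N - 1 := by
    rcases Nat.eq_zero_or_pos v with hv0 | hv0
    · have : m = d := by rw [← hmd, hv0, pow_zero, one_mul]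
      rcases h3 with h | h
      · exfalso; exact hdodd (this ▸ h)
      · omega
    · have : 2 * d ≤ m := by
        calc 2 * d = 2 ^ 1 * d := by ring_nf
          _ ≤ 2 ^ v * d := Nat.mul_le_mul_right _ (Nat.pow_le_pow_right (by norm_num) hv0)
          _ = m := hmd
      have hKle := pow_Kv_le hN
      have : d < 2 ^ Kv N := by
        have : 2 * d < 2 * 2 ^ Kv N := by
          calc 2 * d ≤ m := this
            _ < 2 ^ (Kv N + 1) := h2
            _ = 2 * 2 ^ Kv N := by ring
        omega
      omega
  obtain ⟨j, hj⟩ : ∃ j, d = 2 * j + 1 := by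
    rcases Nat.even_or_odd d with h | h
    · exact absurd h.two_dvd hdodd
    · exact ⟨d / 2, by omega⟩
  refine ⟨j + 1, by omega, by omega, ?_⟩
  have hjd : 2 * (j + 1) - 1 = d := by omega
  rw [tval, hjd, ← hmd]
  rw [show Kv N - Nat.log 2 d = v from by omega]
  ring

lemma xseq_eq {N n : ℕ} (hn : 1 ≤ n) (hnN : n ≤ N) :
    xseq n = Real.log (tval N n) / Real.log 2 - (Kv N : ℝ) := by
  have hcast : (2 * (n : ℝ) - 1) = ((2 * n - 1 : ℕ) : ℝ) := by
    push_cast [Nat.cast_sub (by omega : 1 ≤ 2 * n)]; ring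
  have hpos : (0 : ℝ) < ((2 * n - 1 : ℕ) : ℝ) := by
    have : 0 < 2 * n - 1 := by omega
    exact_mod_cast this
  have hlogb : Real.log ((2 * n - 1 : ℕ) : ℝ) / Real.log 2 = Real.logb 2 ((2 * n - 1 : ℕ) : ℝ) := rfl
  -- floor of logb
  have hfloor : ⌊Real.logb 2 ((2 * n - 1 : ℕ) : ℝ)⌋ = (Nat.log 2 (2 * n - 1) : ℤ) := by
    have := Real.floor_logb_natCast (b := 2) (r := ((2 * n - 1 : ℕ) : ℝ)) (le_of_lt hpos)
    rw [show ((2:ℕ):ℝ) = (2:ℝ) by norm_num] at this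
    rw [this, Int.log_natCast]
  -- tval cast
  have htval : ((tval N n : ℕ) : ℝ) =
      ((2 * n - 1 : ℕ) : ℝ) * 2 ^ (Kv N - Nat.log 2 (2 * n - 1)) := by
    rw [tval]; push_cast; ring
  have hlogt : Real.log (tval N n) =
      Real.log ((2 * n - 1 : ℕ) : ℝ) + (Kv N - Nat.log 2 (2 * n - 1) : ℕ) * Real.log 2 := by
    rw [htval, Real.log_mul (ne_of_gt hpos) (by positivity), Real.log_pow]
  have hle : Nat.log 2 (2 * n - 1) ≤ Kv N := log_le_Kv hnN
  have hlog2 : (0:ℝ) < Real.log 2 := Real.log_pos (by norm_num)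
  have hfr : Int.fract (Real.log ((2 * n - 1 : ℕ) : ℝ) / Real.log 2) =
      Real.log ((2 * n - 1 : ℕ) : ℝ) / Real.log 2 - (Nat.log 2 (2 * n - 1) : ℝ) := by
    rw [Int.fract]
    congr 1
    rw [show Real.log ((2 * n - 1 : ℕ) : ℝ) / Real.log 2 = Real.logb 2 ((2 * n - 1 : ℕ) : ℝ)
      from rfl, hfloor]
    push_cast; ring
  rw [xseq, hcast, hfr, hlogt]
  push_cast [Nat.cast_sub hle]
  field_simp
  ring

lemma log_quad {w m p q : ℕ} (hw : 0 < w) (hm : 0 < m) (hp : 0 < p) (hq : 0 < q)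
    (h : w * q ≤ p * m) : Real.log w - Real.log m ≤ Real.log p - Real.log q := by
  have hwR : (0:ℝ) < w := by exact_mod_cast hw
  have hmR : (0:ℝ) < m := by exact_mod_cast hm
  have hpR : (0:ℝ) < p := by exact_mod_cast hp
  have hqR : (0:ℝ) < q := by exact_mod_cast hq
  have hR : (w:ℝ) * q ≤ (p:ℝ) * m := by exact_mod_cast h
  have := Real.log_le_log (by positivity) hR
  rw [Real.log_mul (ne_of_gt hwR) (ne_of_gt hqR), Real.log_mul (ne_of_gt hpR) (ne_of_gt hmR)]
    at this
  linarith

lemma fract_spec {N k l : ℕ} (hk1 : 1 ≤ k) (hkN : k ≤ N) (hl1 : 1 ≤ l) (hlN : l ≤ N)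
    (hlk : l ≠ k) :
    ∃ w : ℕ, ((tval N k < tval N l ∧ w = tval N l) ∨ (tval N l < tval N k ∧ w = 2 * tval N l)) ∧
      Int.fract (xseq l - xseq k) =
        (Real.log w - Real.log (tval N k)) / Real.log 2 := by
  have hlog2 : (0:ℝ) < Real.log 2 := Real.log_pos (by norm_num)
  have ha := tval_pos hl1 hlN
  have hb := tval_pos hk1 hkN
  have haR : (0:ℝ) < (tval N l : ℝ) := by exact_mod_cast ha
  have hbR : (0:ℝ) < (tval N k : ℝ) := by exact_mod_cast hb
  have hne : tval N l ≠ tval N k := fun h => hlk (tval_inj hl1 hk1 h)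
  have hdiff : xseq l - xseq k = (Real.log (tval N l) - Real.log (tval N k)) / Real.log 2 := by
    rw [xseq_eq hl1 hlN, xseq_eq hk1 hkN]; ring
  have hub_l : tval N l < 2 ^ (Kv N + 1) := tval_upper hl1 hlN
  have hub_k : tval N k < 2 ^ (Kv N + 1) := tval_upper hk1 hkN
  have hlb_l : 2 ^ Kv N ≤ tval N l := tval_lower hl1 hlN
  have hlb_k : 2 ^ Kv N ≤ tval N k := tval_lower hk1 hkN
  have hpow : 2 ^ (Kv N + 1) = 2 * 2 ^ Kv N := by ring
  set A := Real.log (tval N l) with hA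
  set B := Real.log (tval N k) with hB
  rcases lt_or_gt_of_ne hne with hlt | hgt
  · -- tval l < tval k : wrap, w = 2 * tval l
    refine ⟨2 * tval N l, Or.inr ⟨hlt, rfl⟩, ?_⟩
    have h2a : tval N k < 2 * tval N l := by omega
    have hAB : A < B := Real.log_lt_log haR (by exact_mod_cast hlt)
    have hBA : B < Real.log 2 + A := by
      have := Real.log_lt_log hbR (show (tval N k : ℝ) < 2 * (tval N l : ℝ) by exact_mod_cast h2a)
      rwa [Real.log_mul (by norm_num) (ne_of_gt haR)] at this
    have hr1 : (-1:ℝ) < (A - B) / Real.log 2 := by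
      rw [lt_div_iff₀ hlog2]; linarith
    have hr2 : (A - B) / Real.log 2 < 0 := div_neg_of_neg_of_pos (by linarith) hlog2
    rw [hdiff]
    have hfr : Int.fract ((A - B) / Real.log 2) = (A - B) / Real.log 2 + 1 := by
      calc Int.fract ((A - B) / Real.log 2)
          = Int.fract (((A - B) / Real.log 2 + 1) + ((-1 : ℤ) : ℝ)) := by norm_num
        _ = Int.fract ((A - B) / Real.log 2 + 1) := Int.fract_add_intCast _ _
        _ = (A - B) / Real.log 2 + 1 := Int.fract_eq_self.mpr ⟨by linarith, by linarith⟩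
    rw [hfr]
    have hlog2w : Real.log ((2 * tval N l : ℕ) : ℝ) = Real.log 2 + A := by
      push_cast
      rw [Real.log_mul (by norm_num) (ne_of_gt haR)]
    rw [hlog2w]
    field_simp
    ring
  · -- tval k < tval l : w = tval l
    refine ⟨tval N l, Or.inl ⟨hgt, rfl⟩, ?_⟩
    have h2b : tval N l < 2 * tval N k := by omega
    have hAB : B < A := Real.log_lt_log hbR (by exact_mod_cast hgt)
    have hBA : A < Real.log 2 + B := by
      have := Real.log_lt_log haR (show (tval N l : ℝ) < 2 * (tval N k : ℝ) by exact_mod_cast h2b)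
      rwa [Real.log_mul (by norm_num) (ne_of_gt hbR)] at this
    have hr1 : (0:ℝ) ≤ (A - B) / Real.log 2 := div_nonneg (by linarith) hlog2.le
    have hr2 : (A - B) / Real.log 2 < 1 := by
      rw [div_lt_iff₀ hlog2]; linarith
    rw [hdiff, Int.fract_eq_self.mpr ⟨hr1, hr2⟩]

/-- Target value of the dispersion (numerator form). -/
noncomputable def Lval (N : ℕ) : ℝ := (Real.log ((N : ℝ) + 1) - Real.log N) / Real.log 2

lemma fract_le_L {N k l w : ℕ} (hN : 2 ≤ N) (hk1 : 1 ≤ k) (hkN : k ≤ N)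
    (hspec : Int.fract (xseq l - xseq k) = (Real.log w - Real.log (tval N k)) / Real.log 2)
    (hw : 0 < w) (hb : w * N ≤ (N + 1) * tval N k) :
    Int.fract (xseq l - xseq k) ≤ Lval N := by
  rw [hspec, Lval]
  have hlog2 : (0:ℝ) < Real.log 2 := Real.log_pos (by norm_num)
  have h := log_quad hw (tval_pos hk1 hkN) (show 0 < N + 1 by omega) (show 0 < N by omega) hb
  have hcast : Real.log ((N + 1 : ℕ) : ℝ) = Real.log ((N : ℝ) + 1) := by push_cast; ring_nf
  rw [hcast] at h
  gcongr

lemma L_le_fract {N k l w : ℕ} (hN : 2 ≤ N) (hk1 : 1 ≤ k) (hkN : k ≤ N)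
    (hspec : Int.fract (xseq l - xseq k) = (Real.log w - Real.log (tval N k)) / Real.log 2)
    (hb : (N + 1) * tval N k ≤ w * N) :
    Lval N ≤ Int.fract (xseq l - xseq k) := by
  rw [hspec, Lval]
  have hlog2 : (0:ℝ) < Real.log 2 := Real.log_pos (by norm_num)
  have h := log_quad (show 0 < N + 1 by omega) (show 0 < N by omega)
    (show 0 < w by nlinarith [tval_pos hk1 hkN]) (tval_pos hk1 hkN) hb
  have hcast : Real.log ((N + 1 : ℕ) : ℝ) = Real.log ((N : ℝ) + 1) := by push_cast; ring_nf
  rw [hcast] at h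
  gcongr

lemma neighbor_core {N k w0 : ℕ} (hN : 2 ≤ N) (hk1 : 1 ≤ k) (hkN : k ≤ N)
    (heven : 2 ∣ w0) (hgt : tval N k < w0) (hbound : w0 * N ≤ (N + 1) * tval N k)
    (hle2 : w0 ≤ 2 ^ (Kv N + 1)) :
    ∃ l, 1 ≤ l ∧ l ≤ N ∧ l ≠ k ∧ Int.fract (xseq l - xseq k) ≤ Lval N := by
  have hN1 : 1 ≤ N := by omega
  have hml := tval_lower hk1 hkN
  have hmu := tval_upper hk1 hkN
  have hpow : 2 ^ (Kv N + 1) = 2 * 2 ^ Kv N := by ring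
  by_cases hcase : w0 < 2 ^ (Kv N + 1)
  · obtain ⟨l, hl1, hlN, htl⟩ := tval_surj hN1 (by omega) hcase (Or.inl heven)
    have hlk : l ≠ k := by intro h; rw [h] at htl; omega
    obtain ⟨w, hwc, hspec⟩ := fract_spec hk1 hkN hl1 hlN hlk
    have hwv : w = w0 := by rcases hwc with ⟨h1, h2⟩ | ⟨h1, h2⟩ <;> omega
    exact ⟨l, hl1, hlN, hlk, fract_le_L hN hk1 hkN hspec (by omega)
      (by rw [hwv]; exact hbound)⟩
  · -- w0 = 2^(Kv N + 1) : wrap around to the smallest point 2^(Kv N)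
    have hw0eq : w0 = 2 ^ (Kv N + 1) := by omega
    obtain ⟨l, hl1, hlN, htl⟩ := tval_surj hN1 (le_refl _) (by omega)
      (Or.inr (pow_Kv_le hN1))
    have hlt : tval N l < tval N k := by
      rw [htl]
      rcases Nat.lt_or_ge (2 ^ Kv N) (tval N k) with h | h
      · exact h
      · exfalso
        have hmeq : tval N k = 2 ^ Kv N := by omega
        have : (2 ^ Kv N) * (2 * N) ≤ (2 ^ Kv N) * (N + 1) := by
          calc (2 ^ Kv N) * (2 * N) = w0 * N := by rw [hw0eq, hpow]; ring
            _ ≤ (N + 1) * tval N k := hbound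
            _ = (2 ^ Kv N) * (N + 1) := by rw [hmeq]; ring
        have := Nat.le_of_mul_le_mul_left this (by positivity)
        omega
    have hlk : l ≠ k := by intro h; rw [h] at hlt; omega
    obtain ⟨w, hwc, hspec⟩ := fract_spec hk1 hkN hl1 hlN hlk
    have hwv : w = 2 ^ (Kv N + 1) := by
      rcases hwc with ⟨h1, h2⟩ | ⟨h1, h2⟩
      · omega
      · rw [h2, htl, hpow]
    refine ⟨l, hl1, hlN, hlk, fract_le_L hN hk1 hkN hspec (by rw [hwv]; positivity) ?_⟩
    rw [hwv, ← hw0eq]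
    exact hbound

lemma neighbor {N k : ℕ} (hN : 2 ≤ N) (hk1 : 1 ≤ k) (hkN : k ≤ N) :
    ∃ l, 1 ≤ l ∧ l ≤ N ∧ l ≠ k ∧ Int.fract (xseq l - xseq k) ≤ Lval N := by
  have hN1 : 1 ≤ N := by omega
  have hml := tval_lower hk1 hkN
  have hmu := tval_upper hk1 hkN
  have hKle := pow_Kv_le hN1
  have h2N := two_N_lt_pow hN1
  have hpow : 2 ^ (Kv N + 1) = 2 * 2 ^ Kv N := by ring
  have hNle : N ≤ 2 ^ Kv N := by omega
  by_cases hA : tval N k ≤ 2 * N - 2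
  · -- next integer up
    obtain ⟨l, hl1, hlN, htl⟩ := tval_surj hN1 (show 2 ^ Kv N ≤ tval N k + 1 by omega)
      (by omega) (Or.inr (by omega))
    have hlk : l ≠ k := by intro h; rw [h] at htl; omega
    obtain ⟨w, hwc, hspec⟩ := fract_spec hk1 hkN hl1 hlN hlk
    have hwv : w = tval N k + 1 := by rcases hwc with ⟨h1, h2⟩ | ⟨h1, h2⟩ <;> omega
    refine ⟨l, hl1, hlN, hlk, fract_le_L hN hk1 hkN hspec (by omega) ?_⟩
    rw [hwv]
    have hNm : N ≤ tval N k := le_trans hNle hml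
    calc (tval N k + 1) * N = N * tval N k + N := by ring
      _ ≤ N * tval N k + tval N k := by omega
      _ = (N + 1) * tval N k := by ring
  · rcases em (2 ∣ tval N k) with hpar | hpar
    · -- even, ≥ 2N : next even integer
      have hge : 2 * N ≤ tval N k := by omega
      have hdvd : 2 ∣ 2 ^ (Kv N + 1) := ⟨2 ^ Kv N, hpow⟩
      refine neighbor_core (w0 := tval N k + 2) hN hk1 hkN (by omega) (by omega) ?_ (by omega)
      calc (tval N k + 2) * N = N * tval N k + 2 * N := by ring
        _ ≤ N * tval N k + tval N k := by omega
        _ = (N + 1) * tval N k := by ring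
    · -- odd : tval N k = 2N - 1, next is 2N
      have heq : tval N k = 2 * N - 1 := by
        have := tval_odd_le hk1 hkN hpar
        omega
      obtain ⟨M, hM⟩ : ∃ M, tval N k = M ∧ M + 1 = 2 * N := ⟨tval N k, rfl, by omega⟩
      obtain ⟨hM1, hM2⟩ := hM
      refine neighbor_core (w0 := 2 * N) hN hk1 hkN ⟨N, by omega⟩ (by omega) ?_ (by omega)
      rw [hM1, ← hM2]
      calc (M + 1) * N = M * N + N := by ring
        _ ≤ M * N + M := by omega
        _ = (N + 1) * M := by ring

lemma witness {N : ℕ} (hN : 2 ≤ N) :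
    ∃ k, 1 ≤ k ∧ k ≤ N ∧ ∀ l, 1 ≤ l → l ≤ N → l ≠ k →
      Lval N ≤ Int.fract (xseq l - xseq k) := by
  have hN1 : 1 ≤ N := by omega
  have hKle := pow_Kv_le hN1
  have h2N := two_N_lt_pow hN1
  have hpow : 2 ^ (Kv N + 1) = 2 * 2 ^ Kv N := by ring
  by_cases hc : 2 * N < 2 ^ (Kv N + 1)
  · -- the gap from 2N to 2N+2
    obtain ⟨k, hk1, hkN, htk⟩ := tval_surj hN1 (show 2 ^ Kv N ≤ 2 * N by omega) hc
      (Or.inl ⟨N, rfl⟩)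
    refine ⟨k, hk1, hkN, fun l hl1 hlN hlk => ?_⟩
    obtain ⟨w, hwc, hspec⟩ := fract_spec hk1 hkN hl1 hlN hlk
    have hlb_l := tval_lower hl1 hlN
    have hw : 2 * N + 2 ≤ w := by
      rcases hwc with ⟨h1, h2⟩ | ⟨h1, h2⟩
      · -- w = tval N l > 2N ; it cannot be 2N+1 since odd values are ≤ 2N-1
        rcases em (2 ∣ tval N l) with hp | hp
        · omega
        · have := tval_odd_le hl1 hlN hp; omega
      · -- w = 2 * tval N l with tval N l ≥ 2^Kv N, and 2^(K+1) > 2N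
        omega
    apply L_le_fract hN hk1 hkN hspec
    rw [htk]
    calc (N + 1) * (2 * N) = (2 * N + 2) * N := by ring
      _ ≤ w * N := Nat.mul_le_mul_right N hw
  · -- 2N = 2^(K+1), so N = 2^K is itself a point; gap from N to N+1
    have h2Neq : 2 * N = 2 ^ (Kv N + 1) := by omega
    have hNeq : N = 2 ^ Kv N := by omega
    obtain ⟨k, hk1, hkN, htk⟩ := tval_surj hN1 (le_of_eq hNeq.symm) (by omega)
      (Or.inr (by omega))
    refine ⟨k, hk1, hkN, fun l hl1 hlN hlk => ?_⟩
    obtain ⟨w, hwc, hspec⟩ := fract_spec hk1 hkN hl1 hlN hlk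
    have hlb_l := tval_lower hl1 hlN
    have hw : N + 1 ≤ w := by
      rcases hwc with ⟨h1, h2⟩ | ⟨h1, h2⟩ <;> omega
    apply L_le_fract hN hk1 hkN hspec
    rw [htk]
    calc (N + 1) * N = (N + 1) * N := rfl
      _ ≤ w * N := Nat.mul_le_mul_right N hw

lemma gapSet_finite (N k : ℕ) :
    ((fun l => Int.fract (xseq l - xseq k)) '' (Set.Icc 1 N \ {k})).Finite :=
  (((Set.finite_Icc 1 N).diff (t := {k})).image _)

lemma gapRight_le {N k : ℕ} (hN : 2 ≤ N) (hk1 : 1 ≤ k) (hkN : k ≤ N) :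
    gapRight N k ≤ Lval N := by
  obtain ⟨l, hl1, hlN, hlk, hle⟩ := neighbor hN hk1 hkN
  refine le_trans (csInf_le (gapSet_finite N k).bddBelow ?_) hle
  exact ⟨l, ⟨Set.mem_Icc.mpr ⟨hl1, hlN⟩, hlk⟩, rfl⟩

lemma disp_eq {N : ℕ} (hN : 2 ≤ N) : disp N = Lval N := by
  have h1N : (1 : ℕ) ∈ Set.Icc 1 N := Set.mem_Icc.mpr ⟨le_refl 1, by omega⟩
  apply le_antisymm
  · apply csSup_le
    · exact ⟨gapRight N 1, ⟨1, h1N, rfl⟩⟩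
    · rintro x ⟨k, hk, rfl⟩
      obtain ⟨hk1, hkN⟩ := Set.mem_Icc.mp hk
      exact gapRight_le hN hk1 hkN
  · obtain ⟨k, hk1, hkN, hlow⟩ := witness hN
    have hgap : gapRight N k = Lval N := by
      apply le_antisymm (gapRight_le hN hk1 hkN)
      apply le_csInf
      · obtain ⟨l, hl1, hlN, hlk, _⟩ := neighbor hN hk1 hkN
        exact ⟨_, ⟨l, ⟨Set.mem_Icc.mpr ⟨hl1, hlN⟩, hlk⟩, rfl⟩⟩
      · rintro x ⟨l, ⟨hl, hlk⟩, rfl⟩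
        obtain ⟨hl1, hlN⟩ := Set.mem_Icc.mp hl
        exact hlow l hl1 hlN hlk
    rw [← hgap]
    exact le_csSup ((Set.finite_Icc 1 N).image _).bddAbove ⟨k, Set.mem_Icc.mpr ⟨hk1, hkN⟩, rfl⟩

theorem dispersion_eq_and_low_dispersion :
    (∀ N : ℕ, 2 ≤ N →
      disp N = (Real.log ((N : ℝ) + 1) - Real.log (N : ℝ)) / Real.log 2) ∧
    Filter.Tendsto (fun N : ℕ => (N : ℝ) * disp N) Filter.atTop (nhds (1 / Real.log 2)) := by
  constructor
  · exact fun N hN => disp_eq hN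
  · have h1 : Tendsto (fun x : ℝ => x * Real.log (1 + 1 / x)) atTop (nhds 1) :=
      Real.tendsto_mul_log_one_add_div_atTop 1
    have h2 : Tendsto (fun n : ℕ => ((n : ℝ) * Real.log (1 + 1 / (n : ℝ))) / Real.log 2)
        atTop (nhds (1 / Real.log 2)) :=
      (h1.comp tendsto_natCast_atTop_atTop).div_const _
    apply h2.congr'
    filter_upwards [eventually_ge_atTop 2] with N hN
    have hNR : (0:ℝ) < (N : ℝ) := by
      have : 0 < N := by omega
      exact_mod_cast this
    have hfrac : (1 : ℝ) + 1 / (N : ℝ) = ((N : ℝ) + 1) / N := by field_simp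
    have hl : Real.log (1 + 1 / (N : ℝ)) = Real.log ((N : ℝ) + 1) - Real.log N := by
      rw [hfrac, Real.log_div (by positivity) (ne_of_gt hNR)]
    rw [hl, disp_eq hN, Lval]
    ring
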